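/- For β > 0 and b ∈ (0, β), with w(z) = exp(-z² - b²), the identity (1/(2πi)) ∫_{-∞}^{∞} [w(t)·iβ + (w(t) − w(t + iβ))·(t − ib)] / [(t − ib)(t + iβ − ib)] dt = 1 holds. -/

import Mathlib

open MeasureTheory

open Complex Filter in
private lemma aux_sub_I_ne (t c : ℝ) (hc : c ≠ 0) : (t : ℂ) - Complex.I * c ≠ 0 := by
  intro h
  have := congrArg Complex.im h
  simp at this
  exact hc this

open Complex Filter in
private lemma aux_norm_sub_I (t c : ℝ) : ‖(t:ℂ) - Complex.I*c‖ = Real.sqrt (t^2+c^2) := by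
  rw [Complex.norm_def]
  congr 1
  simp [Complex.normSq_apply]
  ring

open Complex Filter in
private lemma aux_normW (b : ℝ) (z : ℂ) :
    ‖Complex.exp (-z^2 - (b:ℂ)^2)‖ = Real.exp (z.im^2 - z.re^2 - b^2) := by
  rw [Complex.norm_exp]
  congr 1
  simp [pow_two, Complex.mul_re]
  try ring

open Complex Filter in
private lemma aux_Wval (b : ℝ) : Complex.exp (-(Complex.I*b)^2 - (b:ℂ)^2) = 1 := by
  have : -(Complex.I*(b:ℂ))^2 - (b:ℂ)^2 = 0 := by
    rw [mul_pow, Complex.I_sq]; ring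
  rw [this, Complex.exp_zero]

open Complex Filter in
private lemma aux_hform {c : ℝ} (hc : c ≠ 0) :
    ∀ t : ℝ, c / (t^2+c^2) = c⁻¹ * (1 + (t/c)^2)⁻¹ := by
  intro t
  have hden : (t:ℝ)^2 + c^2 ≠ 0 := by positivity
  field_simp
  ring

open Complex Filter in
private lemma aux_intA {c : ℝ} (hc : 0 < c) : ∫ t : ℝ, c / (t^2 + c^2) = Real.pi := by
  simp_rw [aux_hform hc.ne']
  rw [integral_const_mul, MeasureTheory.Measure.integral_comp_div (fun s : ℝ => (1+s^2)⁻¹) c,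
    integral_univ_inv_one_add_sq, abs_of_pos hc, smul_eq_mul]
  field_simp

open Complex Filter in
private lemma aux_intA_int {c : ℝ} (hc : c ≠ 0) :
    Integrable (fun t : ℝ => c / (t^2 + c^2)) := by
  simp_rw [aux_hform hc]
  exact (integrable_inv_one_add_sq.comp_div hc).const_mul _

open Complex Filter in
private lemma aux_inv_sub_I (t c : ℝ) (hc : c ≠ 0) :
    ((t : ℂ) - Complex.I * c)⁻¹ = ↑(t/(t^2+c^2)) + ↑(c/(t^2+c^2)) * Complex.I := by
  have hden : (t:ℝ)^2 + c^2 ≠ 0 := by positivity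
  refine eq_comm.mp (eq_inv_of_mul_eq_one_left ?_)
  have hdenC : ((t:ℂ))^2 + (c:ℂ)^2 ≠ 0 := by
    intro h
    exact hden (by exact_mod_cast h)
  push_cast
  field_simp
  linear_combination (-(c:ℂ)^2 + Complex.I * c * t - (t:ℂ)*c*Complex.I) * Complex.I_sq

open Complex Filter in
private lemma aux_intQ {β b : ℝ} (hβ : 0 < β) (hb0 : 0 < b) (hbβ : b < β)
    (hq : Integrable (fun t : ℝ =>
      ((t:ℂ) - Complex.I * b)⁻¹ - ((t:ℂ) - Complex.I * ((b:ℝ) - β))⁻¹)) :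
    ∫ t : ℝ, (((t:ℂ) - Complex.I * b)⁻¹ - ((t:ℂ) - Complex.I * ((b:ℝ) - β))⁻¹)
      = 2 * Real.pi * Complex.I := by
  have hc1 : b ≠ 0 := ne_of_gt hb0
  have hc2 : b - β ≠ 0 := by intro h; exact absurd (by linarith : b = β) (ne_of_lt hbβ)
  set u : ℝ → ℝ := fun t => t/(t^2+b^2) - t/(t^2+(b-β)^2) with hu
  set v : ℝ → ℝ := fun t => b/(t^2+b^2) - (b-β)/(t^2+(b-β)^2) with hv
  have hqform : ∀ t : ℝ, ((t:ℂ) - Complex.I * b)⁻¹ - ((t:ℂ) - Complex.I * ((b:ℝ) - β))⁻¹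
      = ↑(u t) + ↑(v t) * Complex.I := by
    intro t
    have e2 := aux_inv_sub_I t (b-β) hc2
    push_cast at e2 ⊢
    rw [aux_inv_sub_I t b hc1, e2]
    simp only [hu, hv]
    push_cast
    ring
  have hre : ∀ t : ℝ, (((t:ℂ) - Complex.I * b)⁻¹ - ((t:ℂ) - Complex.I * ((b:ℝ) - β))⁻¹).re
      = u t := by
    intro t; rw [hqform t]; simp
  have him : ∀ t : ℝ, (((t:ℂ) - Complex.I * b)⁻¹ - ((t:ℂ) - Complex.I * ((b:ℝ) - β))⁻¹).im
      = v t := by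
    intro t; rw [hqform t]; simp
  have key := integral_re_add_im hq
  simp only [RCLike.re_to_complex, RCLike.im_to_complex] at key
  simp_rw [hre, him] at key
  have hiu : ∫ t : ℝ, u t = 0 := by
    have h1 : ∫ t : ℝ, u (-t) = ∫ t : ℝ, u t := integral_neg_eq_self u volume
    have hodd : ∀ t : ℝ, u (-t) = - u t := by
      intro t; simp only [hu, neg_sq]; ring
    simp_rw [hodd, integral_neg] at h1
    linarith
  have hiv : ∫ t : ℝ, v t = 2 * Real.pi := by
    have h1 : ∫ t : ℝ, b/(t^2+b^2) = Real.pi := aux_intA hb0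
    have h2 : ∫ t : ℝ, (b-β)/(t^2+(b-β)^2) = -Real.pi := by
      have h3 : ∀ t : ℝ, (b-β)/(t^2+(b-β)^2) = -((β-b)/(t^2+(β-b)^2)) := by
        intro t
        have he : (b-β)^2 = (β-b)^2 := by ring
        rw [he]; ring
      simp_rw [h3]
      rw [integral_neg, aux_intA (by linarith : (0:ℝ) < β - b)]
    simp only [hv]
    rw [integral_sub (aux_intA_int hc1) (aux_intA_int hc2), h1, h2]
    ring
  rw [← key, hiu, hiv]
  simp only [RCLike.I_to_complex]
  push_cast
  simp [Complex.ext_iff]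

open Complex Filter in
private lemma aux_hq_int {β b : ℝ} (hβ : 0 < β) (hb0 : 0 < b) (hbβ : b < β) :
    Integrable (fun t : ℝ =>
      ((t:ℂ) - Complex.I * b)⁻¹ - ((t:ℂ) - Complex.I * ((b:ℝ) - β))⁻¹) := by
  have hc1 : b ≠ 0 := ne_of_gt hb0
  have hc2 : b - β ≠ 0 := sub_ne_zero.mpr (ne_of_lt hbβ)
  have hne2 : ∀ t : ℝ, (t:ℂ) - Complex.I * ((b:ℝ) - β) ≠ 0 := by
    intro t
    have := aux_sub_I_ne t (b - β) hc2
    push_cast at this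
    exact this
  set m : ℝ := min b (β - b) with hm
  have hm0 : 0 < m := lt_min hb0 (by linarith)
  have hcont : Continuous (fun t : ℝ =>
      ((t:ℂ) - Complex.I * b)⁻¹ - ((t:ℂ) - Complex.I * ((b:ℝ) - β))⁻¹) := by
    apply Continuous.sub
    · exact (Complex.continuous_ofReal.sub continuous_const).inv₀
        (fun t => aux_sub_I_ne t b hc1)
    · exact (Complex.continuous_ofReal.sub continuous_const).inv₀ hne2
  apply Integrable.mono' ((aux_intA_int (ne_of_gt hm0)).const_mul (β/m))
    hcont.aestronglyMeasurable
  filter_upwards with t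
  have hid : ((t:ℂ) - Complex.I * b)⁻¹ - ((t:ℂ) - Complex.I * ((b:ℝ) - β))⁻¹
      = (Complex.I * β) / (((t:ℂ) - Complex.I * b) * ((t:ℂ) - Complex.I * ((b:ℝ) - β))) := by
    field_simp [aux_sub_I_ne t b hc1, hne2 t]
    ring
  have hnn : ‖(t:ℂ) - Complex.I * b‖ = Real.sqrt (t^2+b^2) := aux_norm_sub_I t b
  have hnn2 : ‖(t:ℂ) - Complex.I * ((b:ℝ) - β)‖ = Real.sqrt (t^2+(b-β)^2) := by
    have := aux_norm_sub_I t (b - β)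
    push_cast at this
    exact this
  rw [hid, norm_div,
    show ‖((t:ℂ) - Complex.I * b) * ((t:ℂ) - Complex.I * ((b:ℝ) - β))‖
      = Real.sqrt (t^2+b^2) * Real.sqrt (t^2+(b-β)^2) from by rw [norm_mul, hnn, hnn2]]
  have hprod : t^2 + m^2 ≤ Real.sqrt (t^2+b^2) * Real.sqrt (t^2+(b-β)^2) := by
    have e1 : Real.sqrt (t^2+m^2) ≤ Real.sqrt (t^2+b^2) := by
      apply Real.sqrt_le_sqrt
      have : m ≤ b := min_le_left _ _
      nlinarith
    have e2 : Real.sqrt (t^2+m^2) ≤ Real.sqrt (t^2+(b-β)^2) := by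
      apply Real.sqrt_le_sqrt
      have : m ≤ β - b := min_le_right _ _
      nlinarith
    have e3 : Real.sqrt (t^2+m^2) * Real.sqrt (t^2+m^2) = t^2 + m^2 :=
      Real.mul_self_sqrt (by positivity)
    nlinarith [Real.sqrt_nonneg (t^2+m^2), Real.sqrt_nonneg (t^2+b^2),
      Real.sqrt_nonneg (t^2+(b-β)^2)]
  have hden0 : (0:ℝ) < t^2 + m^2 := by positivity
  have hIβ : ‖Complex.I * (β:ℂ)‖ = β := by
    rw [norm_mul, Complex.norm_I, one_mul, Complex.norm_real, Real.norm_of_nonneg hβ.le]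
  rw [hIβ]
  have goal1 : β / (Real.sqrt (t^2+b^2) * Real.sqrt (t^2+(b-β)^2)) ≤ β / (t^2+m^2) :=
    div_le_div₀ hβ.le (le_refl β) hden0 hprod
  have hrhs : β/m*(m/(t^2+m^2)) = β/(t^2+m^2) := by
    field_simp
  rw [hrhs]
  exact goal1

open Complex Filter in
private lemma aux_hg1_int {β b : ℝ} (hβ : 0 < β) (hb0 : 0 < b) (hbβ : b < β) :
    Integrable (fun t : ℝ =>
      Complex.exp (-(t:ℂ)^2 - (b:ℂ)^2) / ((t:ℂ) - Complex.I * b)) := by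
  have hcont : Continuous (fun t : ℝ =>
      Complex.exp (-(t:ℂ)^2 - (b:ℂ)^2) / ((t:ℂ) - Complex.I * b)) := by
    apply Continuous.div
    · continuity
    · continuity
    · exact fun t => aux_sub_I_ne t b (ne_of_gt hb0)
  apply Integrable.mono' ((integrable_exp_neg_mul_sq one_pos).div_const b)
    hcont.aestronglyMeasurable
  filter_upwards with t
  rw [norm_div, aux_normW b, aux_norm_sub_I]
  have h1 : Real.exp ((((t:ℂ)).im)^2 - (((t:ℂ)).re)^2 - b^2) ≤ Real.exp (-1*t^2) := by
    apply Real.exp_le_exp.mpr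
    simp
    nlinarith [sq_nonneg b]
  have h2 : b ≤ Real.sqrt (t^2+b^2) :=
    (Real.le_sqrt hb0.le (by positivity)).mpr (by nlinarith)
  exact div_le_div₀ (Real.exp_nonneg _) h1 hb0 h2

open Complex Filter in
private lemma aux_hg2_int {β b : ℝ} (hβ : 0 < β) (hb0 : 0 < b) (hbβ : b < β) :
    Integrable (fun t : ℝ =>
      Complex.exp (-((t:ℂ) + Complex.I * β)^2 - (b:ℂ)^2)
        / ((t:ℂ) + Complex.I * β - Complex.I * b)) := by
  have hne : ∀ t : ℝ, (t:ℂ) + Complex.I * β - Complex.I * b ≠ 0 := by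
    intro t h
    have := congrArg Complex.im h
    simp at this
    linarith
  have hcont : Continuous (fun t : ℝ =>
      Complex.exp (-((t:ℂ) + Complex.I * β)^2 - (b:ℂ)^2)
        / ((t:ℂ) + Complex.I * β - Complex.I * b)) := by
    apply Continuous.div
    · continuity
    · continuity
    · exact hne
  apply Integrable.mono'
    (((integrable_exp_neg_mul_sq one_pos).const_mul (Real.exp (β^2-b^2))).div_const (β - b))
    hcont.aestronglyMeasurable
  filter_upwards with t
  rw [norm_div, aux_normW b]
  have h1 : Real.exp (((t:ℂ) + Complex.I * β).im^2 - ((t:ℂ) + Complex.I * β).re^2 - b^2)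
      ≤ Real.exp (β^2-b^2) * Real.exp (-1*t^2) := by
    rw [← Real.exp_add]
    apply Real.exp_le_exp.mpr
    simp
    try linarith
  have h2 : β - b ≤ ‖(t:ℂ) + Complex.I * β - Complex.I * b‖ := by
    have h3 := Complex.abs_im_le_norm ((t:ℂ) + Complex.I * β - Complex.I * b)
    have h4 : ((t:ℂ) + Complex.I * β - Complex.I * b).im = β - b := by simp
    rw [h4] at h3
    exact le_trans (le_abs_self _) h3
  exact div_le_div₀ (by positivity) h1 (by linarith) h2

open Complex Filter in
private lemma aux_rect {β b : ℝ} (hβ : 0 < β) (hb0 : 0 < b) (hbβ : b < β)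
    (hint : Integrable (fun t : ℝ =>
      dslope (fun z => Complex.exp (-z^2-(b:ℂ)^2)) (Complex.I*b) t
        - dslope (fun z => Complex.exp (-z^2-(b:ℂ)^2)) (Complex.I*b) (t + β*Complex.I))) :
    ∫ t : ℝ, (dslope (fun z => Complex.exp (-z^2-(b:ℂ)^2)) (Complex.I*b) t
        - dslope (fun z => Complex.exp (-z^2-(b:ℂ)^2)) (Complex.I*b) (t + β*Complex.I)) = 0 := by
  set W : ℂ → ℂ := fun z => Complex.exp (-z^2-(b:ℂ)^2) with hW
  set h : ℂ → ℂ := dslope W (Complex.I*b) with hh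
  have hWd : Differentiable ℂ W := by
    apply Differentiable.cexp
    apply Differentiable.sub_const
    exact (differentiable_pow 2).neg
  have hhd : Differentiable ℂ h := by
    rw [← differentiableOn_univ]
    exact (Complex.differentiableOn_dslope (Filter.univ_mem)).mpr hWd.differentiableOn
  have hhc : Continuous h := hhd.continuous
  have hrect : ∀ R : ℝ, (∫ x : ℝ in -R..R, (h x - h (x + β*Complex.I)))
      = Complex.I • (∫ y : ℝ in (0:ℝ)..β, h (-R + y*Complex.I))
        - Complex.I • (∫ y : ℝ in (0:ℝ)..β, h (R + y*Complex.I)) := by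
    intro R
    have H := Complex.integral_boundary_rect_eq_zero_of_differentiableOn h (-(R:ℂ))
      ((R:ℂ) + β*Complex.I) hhd.differentiableOn
    simp only [Complex.neg_re, Complex.ofReal_re, Complex.add_re, Complex.mul_re,
      Complex.ofReal_im, Complex.I_re, Complex.I_im, Complex.neg_im, Complex.add_im,
      Complex.mul_im, mul_zero, mul_one, zero_mul, sub_zero, zero_add, add_zero, neg_zero,
      zero_sub, Complex.ofReal_zero] at H
    have h1 : IntervalIntegrable (fun x : ℝ => h x) volume (-R) R :=
      (hhc.comp Complex.continuous_ofReal).intervalIntegrable _ _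
    have h2 : IntervalIntegrable (fun x : ℝ => h (x + β*Complex.I)) volume (-R) R :=
      (hhc.comp (Complex.continuous_ofReal.add continuous_const)).intervalIntegrable _ _
    rw [intervalIntegral.integral_sub h1 h2]
    push_cast at H
    linear_combination H
  have hside : ∀ R : ℝ, max β 1 ≤ R → ∀ x : ℝ, |x| = R →
      ∀ y ∈ Set.uIoc (0:ℝ) β, ‖h (x + y*Complex.I)‖ ≤ 2/R := by
    intro R hR x hx y hy
    rw [Set.uIoc_of_le hβ.le] at hy
    have hR1 : (1:ℝ) ≤ R := le_trans (le_max_right _ _) hR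
    have hRβ : β ≤ R := le_trans (le_max_left _ _) hR
    have hR0 : (0:ℝ) < R := lt_of_lt_of_le one_pos hR1
    set z : ℂ := x + y*Complex.I with hz
    have hzre : z.re = x := by simp [hz]
    have hzim : z.im = y := by simp [hz]
    have hzne : z ≠ Complex.I*b := by
      intro hzz
      have := congrArg Complex.re hzz
      rw [hzre] at this
      simp at this
      rw [this] at hx
      simp at hx
      exact absurd hx.symm (ne_of_gt hR0)
    have hval : h z = (W z - 1) / (z - Complex.I*b) := by
      rw [hh, dslope_of_ne W hzne, slope_def_field]
      rw [show W (Complex.I*b) = 1 from aux_Wval b]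
    rw [hval, norm_div]
    have hnum : ‖W z - 1‖ ≤ 2 := by
      have h1 : ‖W z‖ ≤ 1 := by
        rw [hW]
        simp only
        rw [aux_normW b z, Real.exp_le_one_iff]
        have h2 : z.im^2 ≤ β^2 := by
          rw [hzim]; nlinarith [hy.1.le, hy.2]
        have h3 : z.re^2 = R^2 := by rw [hzre, ← _root_.sq_abs, hx]
        nlinarith [sq_nonneg b]
      calc ‖W z - 1‖ ≤ ‖W z‖ + ‖(1:ℂ)‖ := norm_sub_le _ _
        _ ≤ 2 := by rw [norm_one]; linarith
    have hden : R ≤ ‖z - Complex.I*b‖ := by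
      have h4 : |(z - Complex.I*b).re| ≤ ‖z - Complex.I*b‖ :=
        Complex.abs_re_le_norm _
      have h5 : (z - Complex.I*b).re = x := by simp [hzre]
      rw [h5, hx] at h4
      exact h4
    exact div_le_div₀ (by norm_num) hnum hR0 hden
  have hA : Tendsto (fun R : ℝ => ∫ x : ℝ in -R..R, (h x - h (x + β*Complex.I)))
      atTop (nhds 0) := by
    apply squeeze_zero_norm' (a := fun R : ℝ => 4*β/R)
    · filter_upwards [eventually_ge_atTop (max β 1)] with R hR
      have hR0 : (0:ℝ) < R := lt_of_lt_of_le one_pos (le_trans (le_max_right _ _) hR)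
      rw [hrect R]
      have e1 : ‖Complex.I • ∫ y : ℝ in (0:ℝ)..β, h (-R + y*Complex.I)‖ ≤ 2/R * |β - 0| := by
        rw [norm_smul, Complex.norm_I, one_mul]
        apply intervalIntegral.norm_integral_le_of_norm_le_const
        intro y hy
        have := hside R hR (-R) (by rw [abs_neg, abs_of_pos hR0]) y hy
        push_cast at this ⊢
        exact this
      have e2 : ‖Complex.I • ∫ y : ℝ in (0:ℝ)..β, h (R + y*Complex.I)‖ ≤ 2/R * |β - 0| := by
        rw [norm_smul, Complex.norm_I, one_mul]
        apply intervalIntegral.norm_integral_le_of_norm_le_const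
        intro y hy
        exact hside R hR R (abs_of_pos hR0) y hy
      calc ‖(Complex.I • ∫ y : ℝ in (0:ℝ)..β, h (-R + y*Complex.I))
            - Complex.I • ∫ y : ℝ in (0:ℝ)..β, h (R + y*Complex.I)‖
          ≤ 2/R * |β - 0| + 2/R * |β - 0| := norm_sub_le_of_le e1 e2
        _ = 4*β/R := by rw [sub_zero, abs_of_pos hβ]; ring
    · have : Tendsto (fun R : ℝ => 4*β/R) atTop (nhds 0) :=
        Tendsto.div_atTop tendsto_const_nhds tendsto_id
      exact this
  have hB : Tendsto (fun R : ℝ => ∫ x : ℝ in -R..R, (h x - h (x + β*Complex.I)))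
      atTop (nhds (∫ t : ℝ, (h t - h (t + β*Complex.I)))) :=
    intervalIntegral_tendsto_integral hint tendsto_neg_atTop_atBot tendsto_id
  exact tendsto_nhds_unique hB hA

/-- for `β > 0`, `b ∈ (0, β)` and `w z = exp (-z² - b²)`,
`(1/(2πi)) ∫ (w(t) iβ + (w(t) - w(t+iβ))(t - ib)) / ((t - ib)(t + iβ - ib)) dt = 1`. -/
theorem stmt_2 (β b : ℝ) (hβ : 0 < β) (hb : b ∈ Set.Ioo 0 β)
    (w : ℂ → ℂ) (hw : ∀ z : ℂ, w z = Complex.exp (-z ^ 2 - (b : ℂ) ^ 2)) :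
    (1 / (2 * Real.pi * Complex.I)) *
      ∫ t : ℝ,
        (w t * (Complex.I * β) +
          (w t - w (t + Complex.I * β)) * (t - Complex.I * b)) /
        ((t - Complex.I * b) * (t + Complex.I * β - Complex.I * b)) = 1 := by
  obtain ⟨hb0, hbβ⟩ := hb
  have hwfun : w = fun z => Complex.exp (-z ^ 2 - (b : ℂ) ^ 2) := funext hw
  subst hwfun
  have hc1 : b ≠ 0 := ne_of_gt hb0
  have hne1 : ∀ t : ℝ, (t:ℂ) - Complex.I * b ≠ 0 := fun t => aux_sub_I_ne t b hc1
  have hne2 : ∀ t : ℝ, (t:ℂ) + Complex.I * β - Complex.I * b ≠ 0 := by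
    intro t h
    have := congrArg Complex.im h
    simp at this
    linarith
  have hne2' : ∀ t : ℝ, (t:ℂ) - Complex.I * ((b:ℝ) - β) ≠ 0 := by
    intro t
    have := aux_sub_I_ne t (b - β) (sub_ne_zero.mpr (ne_of_lt hbβ))
    push_cast at this
    exact this
  set g : ℝ → ℂ := fun t =>
    Complex.exp (-(t:ℂ)^2 - (b:ℂ)^2) / ((t:ℂ) - Complex.I * b)
      - Complex.exp (-((t:ℂ) + Complex.I * β)^2 - (b:ℂ)^2)
          / ((t:ℂ) + Complex.I * β - Complex.I * b) with hgdef
  set q : ℝ → ℂ := fun t =>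
    ((t:ℂ) - Complex.I * b)⁻¹ - ((t:ℂ) - Complex.I * ((b:ℝ) - β))⁻¹ with hqdef
  have hg : Integrable g := (aux_hg1_int hβ hb0 hbβ).sub (aux_hg2_int hβ hb0 hbβ)
  have hq : Integrable q := aux_hq_int hβ hb0 hbβ
  -- the integrand equals g
  have e1 : ∀ t : ℝ,
      ((fun z => Complex.exp (-z ^ 2 - (b : ℂ) ^ 2)) (t:ℂ) * (Complex.I * β) +
          ((fun z => Complex.exp (-z ^ 2 - (b : ℂ) ^ 2)) (t:ℂ)
            - (fun z => Complex.exp (-z ^ 2 - (b : ℂ) ^ 2)) ((t:ℂ) + Complex.I * β))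
            * ((t:ℂ) - Complex.I * b)) /
        (((t:ℂ) - Complex.I * b) * ((t:ℂ) + Complex.I * β - Complex.I * b)) = g t := by
    intro t
    simp only [hgdef]
    rw [div_sub_div _ _ (hne1 t) (hne2 t)]
    congr 1
    ring
  -- pointwise relation with the dslope function
  have hpt : ∀ t : ℝ,
      dslope (fun z => Complex.exp (-z^2-(b:ℂ)^2)) (Complex.I*b) (t:ℂ)
        - dslope (fun z => Complex.exp (-z^2-(b:ℂ)^2)) (Complex.I*b) ((t:ℂ) + β*Complex.I)
      = g t - q t := by
    intro t
    have hd1 : (t:ℂ) ≠ Complex.I*b := by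
      intro h
      have := congrArg Complex.im h
      simp at this
      exact hc1 this.symm
    have hd2 : (t:ℂ) + β*Complex.I ≠ Complex.I*b := by
      intro h
      have := congrArg Complex.im h
      simp at this
      linarith
    rw [dslope_of_ne _ hd1, dslope_of_ne _ hd2, slope_def_field, slope_def_field,
      aux_Wval b]
    simp only [hgdef, hqdef]
    have harg : (t:ℂ) + (β:ℂ)*Complex.I = (t:ℂ) + Complex.I*(β:ℂ) := by ring
    rw [harg]
    have hd2' : (t:ℂ) + Complex.I*(β:ℂ) - Complex.I*b ≠ 0 := hne2 t
    beta_reduce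
    ring
  have hint : Integrable (fun t : ℝ =>
      dslope (fun z => Complex.exp (-z^2-(b:ℂ)^2)) (Complex.I*b) (t:ℂ)
        - dslope (fun z => Complex.exp (-z^2-(b:ℂ)^2)) (Complex.I*b) ((t:ℂ) + β*Complex.I)) :=
    (hg.sub hq).congr (Filter.Eventually.of_forall (fun t => (hpt t).symm))
  have hzero := aux_rect hβ hb0 hbβ hint
  have h5 : ∫ t : ℝ, (g t - q t) = 0 := by
    rw [← integral_congr_ae (Filter.Eventually.of_forall hpt)]
    exact hzero
  rw [integral_sub hg hq] at h5
  have h6 : ∫ t : ℝ, g t = ∫ t : ℝ, q t := sub_eq_zero.mp h5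
  have h7 : ∫ t : ℝ, q t = 2 * Real.pi * Complex.I := aux_intQ hβ hb0 hbβ hq
  have h8 : (∫ t : ℝ,
      ((fun z => Complex.exp (-z ^ 2 - (b : ℂ) ^ 2)) (t:ℂ) * (Complex.I * β) +
          ((fun z => Complex.exp (-z ^ 2 - (b : ℂ) ^ 2)) (t:ℂ)
            - (fun z => Complex.exp (-z ^ 2 - (b : ℂ) ^ 2)) ((t:ℂ) + Complex.I * β))
            * ((t:ℂ) - Complex.I * b)) /
        (((t:ℂ) - Complex.I * b) * ((t:ℂ) + Complex.I * β - Complex.I * b)))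
      = ∫ t : ℝ, g t := integral_congr_ae (Filter.Eventually.of_forall e1)
  rw [h8, h6, h7]
  have hπ : (2 * (Real.pi:ℂ) * Complex.I) ≠ 0 := by
    simp [Real.pi_ne_zero, Complex.I_ne_zero, Complex.ofReal_ne_zero]
  field_simp
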